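/- Let K_S = L_S^{(1)} + V_S^{(1)} be a generalized number lattice on finite set S, where L_S^{(1)} is a number lattice with basis matrix B_1 (rows form a Z-basis), V_S^{(1)} is a vector space orthogonal to L_S^{(1)} with representative matrix C_1, and D_1 is a representative matrix of (span(L_S^{(1)}) + V_S^{(1)})^⊥. Define B_2, C_2, D_2 by stacking them as the transpose of the inverse of the stacked matrix [B_1; C_1; D_1]. Then the dual K_S^d := { g : <f,g> ∈ Z for all f ∈ K_S } equals L_S^{(2)} + V_S^{(2)}, where L_S^{(2)} is the number lattice with basis matrix B_2 and V_S^{(2)} is the row space of D_2. -/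

import Mathlib

open scoped Pointwise
open Matrix

/-- The dual of a collection of vectors: all vectors with integral dot product
with every member. -/
def dualLat {X : Type*} [Fintype X] (K : Set (X → ℚ)) : Set (X → ℚ) :=
  {g | ∀ f ∈ K, ∃ z : ℤ, ∑ x, f x * g x = (z : ℚ)}

theorem stmt1 {n a b c : ℕ}
    (B1 : Matrix (Fin a) (Fin n) ℚ) (C1 : Matrix (Fin b) (Fin n) ℚ)
    (D1 : Matrix (Fin c) (Fin n) ℚ)
    (L1 V1 K : Set (Fin n → ℚ))
    -- B1 is a basis matrix for the number lattice L1
    (hB1 : LinearIndependent ℚ (fun i => B1 i))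
    (hL1 : L1 = {x | ∃ l : Fin a → ℤ, x = ∑ i, (l i : ℚ) • B1 i})
    -- C1 is a representative matrix for the vector space V1
    (hC1 : LinearIndependent ℚ (fun i => C1 i))
    (hV1 : V1 = (Submodule.span ℚ (Set.range fun i => C1 i) : Set (Fin n → ℚ)))
    -- V1 is orthogonal to L1
    (horth : ∀ l ∈ L1, ∀ v ∈ V1, ∑ x, l x * v x = 0)
    -- D1 is a representative matrix of (span L1 + V1)ᗮ
    (hD1 : LinearIndependent ℚ (fun i => D1 i))
    (hD1span : (Submodule.span ℚ (Set.range fun i => D1 i) : Set (Fin n → ℚ)) =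
      {g | (∀ f ∈ L1, ∑ x, f x * g x = 0) ∧ (∀ f ∈ V1, ∑ x, f x * g x = 0)})
    -- K is the generalized number lattice L1 + V1
    (hK : K = L1 + V1)
    -- [B2; C2; D2]ᵀ = [B1; C1; D1]⁻¹ : N is the inverse of the stacked matrix,
    -- so that B2 i = fun j => N j (inl i), D2 k = fun j => N j (inr (inr k)).
    (N : Matrix (Fin n) (Fin a ⊕ Fin b ⊕ Fin c) ℚ)
    (hMN : (Matrix.of (Sum.elim B1 (Sum.elim C1 D1)) :
        Matrix (Fin a ⊕ Fin b ⊕ Fin c) (Fin n) ℚ) * N = 1)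
    (hNM : N * (Matrix.of (Sum.elim B1 (Sum.elim C1 D1)) :
        Matrix (Fin a ⊕ Fin b ⊕ Fin c) (Fin n) ℚ) = 1) :
    dualLat K =
      {x | ∃ l : Fin a → ℤ, x = ∑ i, (l i : ℚ) • (fun j => N j (Sum.inl i))} +
      (Submodule.span ℚ (Set.range fun k => (fun j => N j (Sum.inr (Sum.inr k)) : Fin n → ℚ)) :
        Set (Fin n → ℚ)) := by
  classical
  set M : Matrix (Fin a ⊕ Fin b ⊕ Fin c) (Fin n) ℚ :=
    Matrix.of (Sum.elim B1 (Sum.elim C1 D1)) with hM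
  have h0L : (0 : Fin n → ℚ) ∈ L1 := by
    rw [hL1]; exact ⟨0, by simp⟩
  have h0V : (0 : Fin n → ℚ) ∈ V1 := by
    rw [hV1]; exact Submodule.zero_mem _
  have hBK : ∀ i, B1 i ∈ K := by
    intro i
    rw [hK]
    refine Set.mem_add.mpr ⟨B1 i, ?_, 0, h0V, add_zero _⟩
    rw [hL1]
    refine ⟨Pi.single i 1, ?_⟩
    simp [Pi.single_apply, ite_smul]
    exact ((Finset.sum_ite_eq' Finset.univ i (fun x => B1 x)).trans (if_pos (Finset.mem_univ i))).symm
  have hVK : ∀ v ∈ V1, v ∈ K := by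
    intro v hv
    rw [hK]
    exact Set.mem_add.mpr ⟨0, h0L, v, hv, zero_add v⟩
  ext g
  constructor
  · intro hg
    have hint : ∀ i, ∃ z : ℤ, ∑ x, B1 i x * g x = (z : ℚ) := fun i => hg (B1 i) (hBK i)
    choose z hz using hint
    have hCg : ∀ j, ∑ x, C1 j x * g x = 0 := by
      intro j
      by_contra hr
      set r : ℚ := ∑ x, C1 j x * g x with hrdef
      have hq : ∀ q : ℚ, ∃ w : ℤ, q * r = (w : ℚ) := by
        intro q
        have hmem : q • C1 j ∈ V1 := by
          rw [hV1]
          exact Submodule.smul_mem _ q (Submodule.subset_span ⟨j, rfl⟩)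
        obtain ⟨w, hw⟩ := hg (q • C1 j) (hVK _ hmem)
        refine ⟨w, ?_⟩
        rw [← hw, hrdef, Finset.mul_sum]
        congr 1; funext x; simp [mul_assoc]
      obtain ⟨w, hw⟩ := hq (1 / (2 * r))
      have h12 : (1 / (2 * r)) * r = 1 / 2 := by field_simp
      rw [h12] at hw
      have h2w : (2 * w : ℚ) = 1 := by linarith
      have : (2 * w : ℤ) = 1 := by exact_mod_cast h2w
      omega
    -- decompose g in the dual basis (columns of N)
    have hdec : g = N *ᵥ (M *ᵥ g) := by
      rw [Matrix.mulVec_mulVec, hNM, Matrix.one_mulVec]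
    have hsplit : g = (∑ i, ((z i : ℚ)) • (fun j => N j (Sum.inl i))) +
        (∑ k, (∑ x, D1 k x * g x) • (fun j => N j (Sum.inr (Sum.inr k)))) := by
      conv_lhs => rw [hdec]
      funext j
      simp only [Matrix.mulVec, dotProduct, Fintype.sum_sum_type, Pi.add_apply,
        Finset.sum_apply, Pi.smul_apply, smul_eq_mul, hM, Matrix.of_apply, Sum.elim_inl,
        Sum.elim_inr, Sum.elim, hCg, hz, mul_zero, Finset.sum_const_zero, zero_add, add_zero]
      congr 1 <;> exact Finset.sum_congr rfl fun _ _ => mul_comm _ _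
    refine Set.mem_add.mpr ⟨_, ⟨z, rfl⟩, _, ?_, hsplit.symm⟩
    refine Submodule.sum_mem _ fun k _ => Submodule.smul_mem _ _ (Submodule.subset_span ⟨k, rfl⟩)
  · intro hg f hf
    obtain ⟨ga, ⟨l, hl⟩, gs, hgs, hsum⟩ := Set.mem_add.mp hg
    rw [SetLike.mem_coe, Submodule.mem_span_range_iff_exists_fun] at hgs
    obtain ⟨r, hr⟩ := hgs
    rw [hK] at hf
    obtain ⟨fl, hfl, fv, hfv, hfsum⟩ := Set.mem_add.mp hf
    rw [hL1] at hfl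
    obtain ⟨lz, hlz⟩ := hfl
    rw [hV1, SetLike.mem_coe, Submodule.mem_span_range_iff_exists_fun] at hfv
    obtain ⟨q, hq⟩ := hfv
    set α : (Fin a ⊕ Fin b ⊕ Fin c) → ℚ :=
      Sum.elim (fun i => (lz i : ℚ)) (Sum.elim q 0) with hα
    set β : (Fin a ⊕ Fin b ⊕ Fin c) → ℚ :=
      Sum.elim (fun i => (l i : ℚ)) (Sum.elim 0 r) with hβ
    have hf_eq : f = α ᵥ* M := by
      rw [← hfsum, hlz, ← hq]
      funext x
      simp only [Matrix.vecMul, dotProduct, Fintype.sum_sum_type, Pi.add_apply,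
        Finset.sum_apply, Pi.smul_apply, smul_eq_mul, hM, Matrix.of_apply, Sum.elim_inl,
        Sum.elim_inr, Sum.elim, hα, Pi.zero_apply, zero_mul, Finset.sum_const_zero, add_zero]
    have hg_eq : g = N *ᵥ β := by
      rw [← hsum, hl, ← hr]
      funext x
      simp only [Matrix.mulVec, dotProduct, Fintype.sum_sum_type, Pi.add_apply,
        Finset.sum_apply, Pi.smul_apply, smul_eq_mul, hβ, Sum.elim_inl, Sum.elim_inr,
        Pi.zero_apply, mul_zero, Finset.sum_const_zero, add_zero, zero_add]
      congr 1
      · exact Finset.sum_congr rfl fun i _ => by ring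
      · exact Finset.sum_congr rfl fun k _ => by ring
    refine ⟨∑ i, lz i * l i, ?_⟩
    have key : ∑ x, f x * g x = α ⬝ᵥ β := by
      rw [hf_eq, hg_eq]
      have : (α ᵥ* M) ⬝ᵥ (N *ᵥ β) = ((α ᵥ* M) ᵥ* N) ⬝ᵥ β := Matrix.dotProduct_mulVec _ _ _
      rw [show ∑ x, (α ᵥ* M) x * (N *ᵥ β) x = (α ᵥ* M) ⬝ᵥ (N *ᵥ β) from rfl, this,
        Matrix.vecMul_vecMul, hMN, Matrix.vecMul_one]
    rw [key]
    simp only [dotProduct, Fintype.sum_sum_type, hα, hβ, Sum.elim_inl, Sum.elim_inr,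
      Pi.zero_apply, mul_zero, zero_mul, Finset.sum_const_zero, add_zero]
    push_cast
    ring
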